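/- Every group homomorphism from a nontrivial finite perfect group G to PSL(2, ℝ) = SL(2, ℝ)/{±1} is trivial. (Consequently every nontrivial finite perfect group is 2-unbounded.) -/

import Mathlib

open scoped MatrixGroups

open Matrix

/-- A group homomorphism is trivial if it sends every element to the identity. -/
def MonoidHom.IsTrivial {G H : Type*} [Group G] [Group H] (f : G →* H) : Prop :=
  ∀ x : G, f x = 1

section Rot

variable {A B : Matrix (Fin 2) (Fin 2) ℝ}

theorem rot_form (hA : Aᵀ * A = 1) (hd : A.det = 1) :
    A 1 1 = A 0 0 ∧ A 0 1 = -(A 1 0) := by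
  have h00 := congr_fun (congr_fun hA 0) 0
  have h01 := congr_fun (congr_fun hA 0) 1
  have h11 := congr_fun (congr_fun hA 1) 1
  simp [Matrix.mul_apply, Fin.sum_univ_two, Matrix.one_apply] at h00 h01 h11
  rw [Matrix.det_fin_two] at hd
  constructor
  · linear_combination (-(A 1 1)) * h00 + A 0 0 * hd + A 1 0 * h01
  · linear_combination (-(A 0 1)) * h00 + A 0 0 * h01 + (-(A 1 0)) * hd

theorem rot_comm (hA : Aᵀ * A = 1) (hdA : A.det = 1)
    (hB : Bᵀ * B = 1) (hdB : B.det = 1) : A * B = B * A := by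
  obtain ⟨ha1, ha2⟩ := rot_form hA hdA
  obtain ⟨hb1, hb2⟩ := rot_form hB hdB
  ext i j
  fin_cases i <;> fin_cases j <;>
    simp [Matrix.mul_apply, Fin.sum_univ_two, ha1, ha2, hb1, hb2] <;> ring

end Rot

open scoped MatrixOrder in
theorem finite_SL2R_subgroup_comm (H : Subgroup (Matrix.SpecialLinearGroup (Fin 2) ℝ))
    [Finite H] (g h : H) : g * h = h * g := by
  haveI := Fintype.ofFinite H
  classical
  set toM : H → Matrix (Fin 2) (Fin 2) ℝ := fun x => ((x : Matrix.SpecialLinearGroup (Fin 2) ℝ) : Matrix (Fin 2) (Fin 2) ℝ) with htoM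
  have toM_mul : ∀ x y : H, toM (x * y) = toM x * toM y := fun x y => rfl
  have toM_det : ∀ x : H, (toM x).det = 1 := fun x => (x : Matrix.SpecialLinearGroup (Fin 2) ℝ).2
  set P : Matrix (Fin 2) (Fin 2) ℝ := ∑ x : H, (toM x)ᵀ * toM x with hP
  -- positive definiteness
  have hterm : ∀ x : H, ((toM x)ᵀ * toM x).PosSemidef := by
    intro x
    have := Matrix.posSemidef_conjTranspose_mul_self (toM x)
    rwa [Matrix.conjTranspose_eq_transpose_of_trivial] at this
  have hPD : P.PosDef := by
    rw [hP, ← Finset.add_sum_erase _ _ (Finset.mem_univ (1 : H))]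
    have h1 : (toM (1 : H))ᵀ * toM 1 = 1 := by
      simp [htoM]
    rw [h1]
    refine Matrix.PosDef.add_posSemidef Matrix.PosDef.one ?_
    refine Finset.sum_induction _ _ (fun a b ha hb => ha.add hb) ?_ (fun x _ => hterm x)
    exact ⟨Matrix.isHermitian_zero, fun x => by simp⟩
  -- invariance
  have hinv : ∀ x : H, (toM x)ᵀ * P * toM x = P := by
    intro x
    have : (toM x)ᵀ * P * toM x = ∑ y : H, (toM (y * x))ᵀ * toM (y * x) := by
      rw [hP, Finset.mul_sum, Finset.sum_mul]
      refine Finset.sum_congr rfl fun y _ => ?_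
      rw [toM_mul, Matrix.transpose_mul]
      noncomm_ring
    rw [this, hP]
    exact Fintype.sum_equiv (Equiv.mulRight x) _ _ (fun y => rfl)
  -- square root
  set S := CFC.sqrt P with hS
  have hSsd : S.PosSemidef := (CFC.sqrt_nonneg P).posSemidef
  have hSS : S * S = P := CFC.sqrt_mul_sqrt_self P hPD.posSemidef.nonneg
  have hSt : Sᵀ = S := by
    have := hSsd.isHermitian
    rwa [Matrix.IsHermitian, Matrix.conjTranspose_eq_transpose_of_trivial] at this
  have hSdet : IsUnit S.det := by
    have hmul : S.det * S.det = P.det := by rw [← Matrix.det_mul, hSS]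
    refine isUnit_iff_ne_zero.mpr fun h0 => ?_
    rw [h0, mul_zero] at hmul
    exact hPD.det_pos.ne' hmul.symm
  have hS1 : S * S⁻¹ = 1 := Matrix.mul_nonsing_inv S hSdet
  have hS2 : S⁻¹ * S = 1 := Matrix.nonsing_inv_mul S hSdet
  have hSit : (S⁻¹)ᵀ = S⁻¹ := by
    rw [Matrix.transpose_nonsing_inv, hSt]
  -- conjugated elements are rotations
  have hrot : ∀ x : H, (S * toM x * S⁻¹)ᵀ * (S * toM x * S⁻¹) = 1 := by
    intro x
    have : (S * toM x * S⁻¹)ᵀ = S⁻¹ * (toM x)ᵀ * S := by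
      rw [Matrix.transpose_mul, Matrix.transpose_mul, hSit, hSt]
      noncomm_ring
    rw [this]
    calc S⁻¹ * (toM x)ᵀ * S * (S * toM x * S⁻¹)
        = S⁻¹ * ((toM x)ᵀ * P * toM x) * S⁻¹ := by rw [← hSS]; noncomm_ring
      _ = S⁻¹ * P * S⁻¹ := by rw [hinv x]
      _ = 1 := by rw [← hSS, ← Matrix.mul_assoc, hS2, Matrix.one_mul, hS1]
  have hdet : ∀ x : H, (S * toM x * S⁻¹).det = 1 := by
    intro x
    have h1 : S.det * S⁻¹.det = 1 := by rw [← Matrix.det_mul, hS1, Matrix.det_one]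
    rw [Matrix.det_mul, Matrix.det_mul, toM_det, mul_one, h1]
  -- conclude
  have cancel : ∀ Z : Matrix (Fin 2) (Fin 2) ℝ, S⁻¹ * (S * Z) = Z := fun Z => by
    rw [← Matrix.mul_assoc, hS2, Matrix.one_mul]
  have conj_mul : ∀ x y : Matrix (Fin 2) (Fin 2) ℝ,
      (S * x * S⁻¹) * (S * y * S⁻¹) = S * (x * y) * S⁻¹ := by
    intro x y
    simp only [Matrix.mul_assoc]
    rw [cancel]
  have E := rot_comm (hrot g) (hdet g) (hrot h) (hdet h)
  rw [conj_mul, conj_mul] at E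
  have E2 := congrArg (fun Z => S⁻¹ * Z * S) E
  simp only [Matrix.mul_assoc, hS2, Matrix.mul_one] at E2
  rw [cancel, cancel] at E2
  have key : toM g * toM h = toM h * toM g := by
    simpa [Matrix.mul_assoc] using E2
  ext1
  ext1
  exact congr_fun (congr_fun key _) _

/-- A nontrivial perfect finite group `G` is `g`-unbounded if every homomorphism
`G → PSL(g-1, ℂ)` is trivial, and moreover every homomorphism `G → SL(g, ℚ)` is trivial
when `g` is odd, while every homomorphism `G → PSL(g, ℝ)` is trivial when `g` is even. -/
def IsUnbounded (g : ℕ) (G : Type*) [Group G] : Prop :=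
  Nontrivial G ∧ Finite G ∧ commutator G = ⊤ ∧
    (∀ f : G →* Matrix.ProjectiveSpecialLinearGroup (Fin (g - 1)) ℂ, f.IsTrivial) ∧
    (Odd g → ∀ f : G →* Matrix.SpecialLinearGroup (Fin g) ℚ, f.IsTrivial) ∧
    (Even g → ∀ f : G →* Matrix.ProjectiveSpecialLinearGroup (Fin g) ℝ, f.IsTrivial)

instance : Finite (Subgroup.center (Matrix.SpecialLinearGroup (Fin 2) ℝ)) :=
  Finite.of_equiv _
    (Matrix.SpecialLinearGroup.center_equiv_rootsOfUnity' (R := ℝ) (0 : Fin 2)).symm.toEquiv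

instance : Subsingleton (Matrix.SpecialLinearGroup (Fin 1) ℂ) := by
  constructor
  intro a b
  have ha := a.2
  have hb := b.2
  rw [Matrix.det_fin_one] at ha hb
  ext i j
  rw [Subsingleton.elim i 0, Subsingleton.elim j 0, ha, hb]

open scoped commutatorElement in
theorem hom_perfect_to_PSL2R_trivial (G : Type*) [Group G] [Finite G]
    (hperf : commutator G = ⊤)
    (f : G →* Matrix.ProjectiveSpecialLinearGroup (Fin 2) ℝ) : f.IsTrivial := by
  classical
  set π := QuotientGroup.mk' (Subgroup.center (Matrix.SpecialLinearGroup (Fin 2) ℝ)) with hπ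
  set H : Subgroup (Matrix.SpecialLinearGroup (Fin 2) ℝ) := f.range.comap π with hH
  haveI : Finite f.range := Finite.of_surjective f.rangeRestrict f.rangeRestrict_surjective
  -- the restriction of π to H, with codomain f.range
  have hmem : ∀ x : H, π x.1 ∈ f.range := fun x => x.2
  set φ : H →* f.range :=
    { toFun := fun x => ⟨π x.1, hmem x⟩
      map_one' := by ext; simp
      map_mul' := fun x y => by ext; simp } with hφ
  haveI : Finite φ.ker := by
    refine Finite.of_injective
      (fun x : φ.ker =>
        (⟨x.1.1, by
          have : π x.1.1 = 1 := congrArg Subtype.val x.2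
          simpa [π, QuotientGroup.mk'_eq_mk', QuotientGroup.eq_one_iff] using this⟩ :
          Subgroup.center (Matrix.SpecialLinearGroup (Fin 2) ℝ))) ?_
    intro x y hxy
    have h1 := congrArg
      (fun z : Subgroup.center (Matrix.SpecialLinearGroup (Fin 2) ℝ) =>
        (z : Matrix.SpecialLinearGroup (Fin 2) ℝ)) hxy
    exact Subtype.ext (Subtype.ext h1)
  haveI : Finite H := by
    haveI := Fintype.ofFinite φ.ker
    haveI := Fintype.ofFinite f.range
    haveI := Group.fintypeOfKerOfCodom φ
    exact Finite.of_fintype _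
  -- any two elements of the range of f commute
  have hcomm : ∀ a b : Matrix.ProjectiveSpecialLinearGroup (Fin 2) ℝ,
      a ∈ f.range → b ∈ f.range → a * b = b * a := by
    intro a b ha hb
    obtain ⟨s, hs⟩ := QuotientGroup.mk'_surjective _ a
    obtain ⟨t, ht⟩ := QuotientGroup.mk'_surjective _ b
    have hsH : s ∈ H := by simp [hH, hπ, Subgroup.mem_comap, hs, ha]
    have htH : t ∈ H := by simp [hH, hπ, Subgroup.mem_comap, ht, hb]
    have := finite_SL2R_subgroup_comm H ⟨s, hsH⟩ ⟨t, htH⟩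
    have hst : s * t = t * s := congrArg Subtype.val this
    rw [← hs, ← ht, ← _root_.map_mul, ← _root_.map_mul, hst]
  -- commutators map to 1
  have hker : ∀ x y : G, ⁅x, y⁆ ∈ f.ker := by
    intro x y
    rw [MonoidHom.mem_ker, map_commutatorElement, commutatorElement_eq_one_iff_commute]
    exact hcomm _ _ ⟨x, rfl⟩ ⟨y, rfl⟩
  have htop : (⊤ : Subgroup G) ≤ f.ker := by
    rw [← hperf, commutator_def, Subgroup.commutator_le]
    intro g₁ _ g₂ _
    exact hker g₁ g₂
  intro x
  exact MonoidHom.mem_ker.mp (htop (Subgroup.mem_top x))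

theorem every_hom_perfect_to_PSL2R_trivial (G : Type*) [Group G] [Finite G] [Nontrivial G]
    (hperf : commutator G = ⊤) :
    (∀ f : G →* Matrix.ProjectiveSpecialLinearGroup (Fin 2) ℝ, f.IsTrivial) ∧
      IsUnbounded 2 G := by
  have main : ∀ f : G →* Matrix.ProjectiveSpecialLinearGroup (Fin 2) ℝ, f.IsTrivial :=
    fun f => hom_perfect_to_PSL2R_trivial G hperf f
  refine ⟨main, ‹Nontrivial G›, ‹Finite G›, hperf, ?_, ?_, fun _ => main⟩
  · haveI : Subsingleton (Matrix.ProjectiveSpecialLinearGroup (Fin 1) ℂ) :=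
      Quotient.instSubsingletonQuotient _
    intro f x
    exact @Subsingleton.elim (Matrix.ProjectiveSpecialLinearGroup (Fin 1) ℂ) this _ _
  · intro h
    exact absurd h (by decide)
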